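/- Let (𝔭₀, 𝔭∞) be a complementary pair of height-one parabolic subalgebras of a finite-dimensional real semisimple Lie algebra 𝔤 and U an open subset of a finite-dimensional real normed space. Let F : U → 𝔭∞^⊥ and F^c : U → 𝔭₀^⊥ be smooth maps with ⁅(DF)_x(u), (DF^c)_x(v)⁆ = ⁅(DF)_x(v), (DF^c)_x(u)⁆ for all x, u, v (a Christoffel pair in stereoprojection). Put η_x(u) := exp(ad F(x))((DF^c)_x(u)), η^c_x(u) := exp(ad F^c(x))((DF)_x(u)), and, for t ∈ ℝ∖{0}, Γ^c(t)(x) := exp(ad F^c(x)) ∘ Γ_{𝔭₀}^{𝔭∞}(t) ∘ exp(−ad F(x)). Then Γ^c(t) gauges d + tη to d + tη^c: for every smooth ψ : U → 𝔤 and all x, u, Γ^c(t)(x)((Dψ)_x(u) + t⁅η_x(u), ψ(x)⁆) = (D(Γ^c(t)ψ))_x(u) + t⁅η^c_x(u), Γ^c(t)(x)(ψ(x))⁆. -/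

import Mathlib

open Module

/-- A Lie algebra structure on a real normed space, recorded as a bilinear bracket.
(Using a bracket carried as data avoids typeclass diamonds between the normed and
the Lie-algebraic structure.) -/
structure LieStructure (L : Type*) [NormedAddCommGroup L] [NormedSpace ℝ L] where
  bracket : L →ₗ[ℝ] L →ₗ[ℝ] L
  alternating : ∀ x : L, bracket x x = 0
  jacobi : ∀ x y z : L, bracket x (bracket y z) =
    bracket (bracket x y) z + bracket y (bracket x z)

namespace LieStructure

variable {L : Type*} [NormedAddCommGroup L] [NormedSpace ℝ L] (B : LieStructure L)

/-- The adjoint action `ad x = ⁅x, ·⁆`. -/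
def ad (x : L) : Module.End ℝ L := B.bracket x

/-- The Killing form `κ(x, y) = tr (ad x ∘ ad y)`. -/
noncomputable def killing (x y : L) : ℝ := LinearMap.trace ℝ L (B.ad x * B.ad y)

/-- Semisimplicity, via Cartan's criterion: the Killing form is nondegenerate. -/
def IsSemisimple : Prop := ∀ x : L, (∀ y : L, B.killing x y = 0) → x = 0

/-- A Lie subalgebra: a submodule closed under the bracket. -/
def IsSubalgebra (p : Submodule ℝ L) : Prop :=
  ∀ x ∈ p, ∀ y ∈ p, B.bracket x y ∈ p

/-- The Killing polar `𝔭^⊥`. -/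
noncomputable def polar (p : Submodule ℝ L) : Submodule ℝ L where
  carrier := {x | ∀ y ∈ p, B.killing x y = 0}
  add_mem' := fun {a b} ha hb y hy => by
    have : B.killing (a + b) y = B.killing a y + B.killing b y := by
      simp [killing, ad, map_add, add_mul]
    rw [this, ha y hy, hb y hy, add_zero]
  zero_mem' := fun y hy => by simp [killing, ad, map_zero, zero_mul]
  smul_mem' := fun c a ha y hy => by
    have : B.killing (c • a) y = c * B.killing a y := by
      simp [killing, ad, map_smul, smul_mul_assoc]
    rw [this, ha y hy, mul_zero]

/-- A height-one parabolic subalgebra: a subalgebra whose Killing polar is an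
abelian (hence nilpotent) subalgebra. -/
def IsH1Parabolic (p : Submodule ℝ L) : Prop :=
  B.IsSubalgebra p ∧ ∀ x ∈ B.polar p, ∀ y ∈ B.polar p, B.bracket x y = 0

/-- Complementary pair of height-one parabolic subalgebras:
`𝔤 = 𝔭 ⊕ 𝔮^⊥` and `𝔤 = 𝔮 ⊕ 𝔭^⊥`. -/
noncomputable def ComplPair (p q : Submodule ℝ L) : Prop :=
  IsCompl p (B.polar q) ∧ IsCompl q (B.polar p)

/-- `exp (ad z)`, the finite exponential series of the adjoint action (exhaustive
whenever `ad z` is nilpotent, since then `(ad z)^(dim 𝔤 + 1) = 0`). -/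
noncomputable def expAd [FiniteDimensional ℝ L] (z : L) : Module.End ℝ L :=
  ∑ k ∈ Finset.range (Module.finrank ℝ L + 1), (k.factorial : ℝ)⁻¹ • (B.ad z) ^ k

end LieStructure

namespace LieStructure

variable {L : Type*} [NormedAddCommGroup L] [NormedSpace ℝ L] (B : LieStructure L)

/-- `g = Γ_𝔭^𝔮(s)`: the linear map acting as multiplication by `s` on `𝔮^⊥`,
by `1` on `𝔭 ∩ 𝔮` and by `s⁻¹` on `𝔭^⊥`. -/
noncomputable def IsGammaMap (p q : Submodule ℝ L) (s : ℝ) (g : Module.End ℝ L) : Prop :=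
  (∀ x ∈ B.polar q, g x = s • x) ∧
  (∀ x, x ∈ p → x ∈ q → g x = x) ∧
  (∀ x ∈ B.polar p, g x = s⁻¹ • x)

end LieStructure

open LieStructure

namespace CGaux
open LieStructure
set_option linter.unusedSectionVars false

section Basic
variable {L : Type*} [NormedAddCommGroup L] [NormedSpace ℝ L] (B : LieStructure L)

lemma bracket_skew (x y : L) : B.bracket x y = - B.bracket y x := by
  have h := B.alternating (x + y)
  simp only [map_add, LinearMap.add_apply, B.alternating] at h
  rw [eq_neg_iff_add_eq_zero]
  simpa [add_comm, add_assoc, add_left_comm] using h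

lemma ad_apply (x y : L) : B.ad x y = B.bracket x y := rfl

lemma ad_bracket (x y : L) : B.ad (B.bracket x y) = B.ad x * B.ad y - B.ad y * B.ad x := by
  ext v
  have h := B.jacobi x y v
  simp only [ad, LinearMap.sub_apply, Module.End.mul_apply]
  rw [h]; abel

lemma killing_symm (x y : L) : B.killing x y = B.killing y x := by
  simp only [killing]
  exact LinearMap.trace_mul_comm ℝ (B.ad x) (B.ad y)

lemma killing_invariant (x y z : L) :
    B.killing (B.bracket x y) z = B.killing x (B.bracket y z) := by
  simp only [killing]
  rw [show B.ad (B.bracket x y) = B.ad x * B.ad y - B.ad y * B.ad x from ad_bracket B x y,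
      show B.ad (B.bracket y z) = B.ad y * B.ad z - B.ad z * B.ad y from ad_bracket B y z]
  simp only [sub_mul, mul_sub, map_sub, mul_assoc]
  congr 1
  rw [LinearMap.trace_mul_comm, mul_assoc]

lemma mem_polar {p : Submodule ℝ L} {x : L} :
    x ∈ B.polar p ↔ ∀ y ∈ p, B.killing x y = 0 := Iff.rfl

lemma ad_linear_add (x y : L) : B.ad (x + y) = B.ad x + B.ad y := map_add B.bracket x y

lemma killing_zero_right (x : L) : B.killing x 0 = 0 := by
  simp [killing, ad, map_zero]

lemma killing_add_right (x y z : L) : B.killing x (y + z) = B.killing x y + B.killing x z := by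
  simp [killing, ad, map_add, mul_add]

lemma killing_sub_left (x y z : L) : B.killing (x - y) z = B.killing x z - B.killing y z := by
  simp [killing, ad, map_sub, sub_mul]

lemma killing_neg_left (x z : L) : B.killing (-x) z = - B.killing x z := by
  simp [killing, ad, map_neg, neg_mul]

/-- `[𝔭^⊥, 𝔭] ⊆ 𝔭^⊥` for a subalgebra `𝔭`. -/
lemma bracket_polar_mem {S : Submodule ℝ L} (hS : B.IsSubalgebra S)
    {w x : L} (hw : w ∈ B.polar S) (hx : x ∈ S) : B.bracket w x ∈ B.polar S := by
  intro y hy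
  rw [killing_invariant]
  exact hw _ (hS x hx y hy)

/-- `[𝔭^⊥, (𝔭^⊥)^⊥] ⊆ 𝔭^⊥` for a subalgebra `𝔭`. -/
lemma bracket_polar_polar_mem {S : Submodule ℝ L} (hS : B.IsSubalgebra S)
    {z y : L} (hz : z ∈ B.polar S) (hy : y ∈ B.polar (B.polar S)) :
    B.bracket z y ∈ B.polar S := by
  intro x hx
  rw [bracket_skew, killing_neg_left, killing_invariant]
  rw [show B.killing y (B.bracket z x) = 0 from hy _ (bracket_polar_mem B hS hz hx)]
  ring

end Basic
section Struct
variable {L : Type*} [NormedAddCommGroup L] [NormedSpace ℝ L] [FiniteDimensional ℝ L]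
  (B : LieStructure L)
variable {p0 pinf : Submodule ℝ L} (hss : B.IsSemisimple)
  (h0 : B.IsH1Parabolic p0) (hinf : B.IsH1Parabolic pinf)
  (hc : B.ComplPair p0 pinf)

omit [FiniteDimensional ℝ L] in
include h0 hinf in
/-- `[𝔭∞^⊥, 𝔭₀^⊥]` is orthogonal to both `𝔭∞^⊥` and `𝔭₀^⊥`. -/
lemma bracket_AB_polar {z w : L} (hz : z ∈ B.polar pinf) (hw : w ∈ B.polar p0) :
    B.bracket z w ∈ B.polar (B.polar pinf) ⊓ B.polar (B.polar p0) := by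
  constructor
  · intro a ha
    rw [bracket_skew, killing_neg_left, killing_invariant, hinf.2 z hz a ha,
      killing_zero_right]
    ring
  · intro b hb
    rw [killing_invariant, h0.2 w hw b hb, killing_zero_right]

include h0 hinf in
/-- `κ` vanishes on `𝔭∞^⊥ × 𝔭∞^⊥`. -/
lemma killing_AA (hcm : IsCompl pinf (B.polar p0))
    {z w : L} (hz : z ∈ B.polar pinf) (hw : w ∈ B.polar pinf) : B.killing z w = 0 := by
  set M : Module.End ℝ L := B.ad z * B.ad w with hMdef
  have hM : ∀ v : L, M v ∈ B.polar pinf := by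
    intro v
    have hv : v ∈ pinf ⊔ B.polar p0 := by rw [hcm.sup_eq_top]; trivial
    obtain ⟨y, hy, b, hb, rfl⟩ := Submodule.mem_sup.mp hv
    have h1 : B.bracket w y ∈ B.polar pinf := bracket_polar_mem B hinf.1 hw hy
    have h2 : B.bracket w b ∈ B.polar (B.polar pinf) :=
      (bracket_AB_polar B h0 hinf hw hb).1
    have : M (y + b) = B.bracket z (B.bracket w y) + B.bracket z (B.bracket w b) := by
      simp [hMdef, Module.End.mul_apply, ad_apply, map_add]
    rw [this, hinf.2 z hz _ h1, zero_add]
    exact bracket_polar_polar_mem B hinf.1 hz h2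
  have hMsq : M * M = 0 := by
    ext v
    show B.bracket z (B.bracket w (M v)) = 0
    rw [hinf.2 w hw (M v) (hM v), map_zero]
  have hnil : IsNilpotent M := ⟨2, by rw [pow_two]; exact hMsq⟩
  have := LinearMap.isNilpotent_trace_of_isNilpotent hnil
  simpa [killing, hMdef] using isNilpotent_iff_eq_zero.mp this

include h0 hinf in
/-- `κ` vanishes on `𝔭₀^⊥ × 𝔭₀^⊥`. -/
lemma killing_BB (hcm : IsCompl p0 (B.polar pinf))
    {z w : L} (hz : z ∈ B.polar p0) (hw : w ∈ B.polar p0) : B.killing z w = 0 := by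
  set M : Module.End ℝ L := B.ad z * B.ad w with hMdef
  have hM : ∀ v : L, M v ∈ B.polar p0 := by
    intro v
    have hv : v ∈ p0 ⊔ B.polar pinf := by rw [hcm.sup_eq_top]; trivial
    obtain ⟨y, hy, b, hb, rfl⟩ := Submodule.mem_sup.mp hv
    have h1 : B.bracket w y ∈ B.polar p0 := bracket_polar_mem B h0.1 hw hy
    have h2 : B.bracket w b ∈ B.polar (B.polar p0) := by
      have := (bracket_AB_polar B h0 hinf hb hw).2
      rw [bracket_skew] at this
      simpa using Submodule.neg_mem _ this
    have : M (y + b) = B.bracket z (B.bracket w y) + B.bracket z (B.bracket w b) := by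
      simp [hMdef, Module.End.mul_apply, ad_apply, map_add]
    rw [this, h0.2 z hz _ h1, zero_add]
    exact bracket_polar_polar_mem B h0.1 hz h2
  have hMsq : M * M = 0 := by
    ext v
    show B.bracket z (B.bracket w (M v)) = 0
    rw [h0.2 w hw (M v) (hM v), map_zero]
  have hnil : IsNilpotent M := ⟨2, by rw [pow_two]; exact hMsq⟩
  have := LinearMap.isNilpotent_trace_of_isNilpotent hnil
  simpa [killing, hMdef] using isNilpotent_iff_eq_zero.mp this

include hss h0 hinf hc in
lemma A_le_pinf : B.polar pinf ≤ pinf := by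
  intro z hz
  have hv : z ∈ pinf ⊔ B.polar p0 := by rw [hc.2.sup_eq_top]; trivial
  obtain ⟨y, hy, b, hb, hyb⟩ := Submodule.mem_sup.mp hv
  have hb0 : b = 0 := by
    apply hss
    intro v
    have hv' : v ∈ p0 ⊔ B.polar pinf := by rw [hc.1.sup_eq_top]; trivial
    obtain ⟨x0, hx0, a, ha, rfl⟩ := Submodule.mem_sup.mp hv'
    rw [killing_add_right]
    have e1 : B.killing b x0 = 0 := hb x0 hx0
    have e2 : B.killing b a = 0 := by
      have : b = z - y := by rw [← hyb]; abel
      rw [this, killing_sub_left, killing_AA B h0 hinf hc.2 hz ha,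
        killing_symm, ha y hy]
      ring
    rw [e1, e2, add_zero]
  rw [← hyb, hb0, add_zero]; exact hy

include hss h0 hinf hc in
lemma B_le_p0 : B.polar p0 ≤ p0 := by
  intro z hz
  have hv : z ∈ p0 ⊔ B.polar pinf := by rw [hc.1.sup_eq_top]; trivial
  obtain ⟨y, hy, b, hb, hyb⟩ := Submodule.mem_sup.mp hv
  have hb0 : b = 0 := by
    apply hss
    intro v
    have hv' : v ∈ pinf ⊔ B.polar p0 := by rw [hc.2.sup_eq_top]; trivial
    obtain ⟨x0, hx0, a, ha, rfl⟩ := Submodule.mem_sup.mp hv'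
    rw [killing_add_right]
    have e1 : B.killing b x0 = 0 := hb x0 hx0
    have e2 : B.killing b a = 0 := by
      have : b = z - y := by rw [← hyb]; abel
      rw [this, killing_sub_left, killing_BB B h0 hinf hc.1 hz ha,
        killing_symm, ha y hy]
      ring
    rw [e1, e2, add_zero]
  rw [← hyb, hb0, add_zero]; exact hy

include hss h0 hinf hc in
/-- `[𝔭∞^⊥, 𝔭₀^⊥] ⊆ 𝔭₀ ∩ 𝔭∞`. -/
lemma bracket_AB_mem_P {z w : L} (hz : z ∈ B.polar pinf) (hw : w ∈ B.polar p0) :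
    B.bracket z w ∈ p0 ⊓ pinf := by
  have hpol := bracket_AB_polar B h0 hinf hz hw
  set c := B.bracket z w with hcdef
  constructor
  · -- c ∈ p0
    have hv : c ∈ p0 ⊔ B.polar pinf := by rw [hc.1.sup_eq_top]; trivial
    obtain ⟨x0, hx0, a, ha, hxa⟩ := Submodule.mem_sup.mp hv
    have ha0 : a = 0 := by
      apply hss
      intro v
      have hv' : v ∈ pinf ⊔ B.polar p0 := by rw [hc.2.sup_eq_top]; trivial
      obtain ⟨y, hy, b, hb, rfl⟩ := Submodule.mem_sup.mp hv'
      rw [killing_add_right]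
      have e1 : B.killing a y = 0 := ha y hy
      have e2 : B.killing a b = 0 := by
        have : a = c - x0 := by rw [← hxa]; abel
        rw [this, killing_sub_left, killing_symm B x0 b, hb x0 hx0,
          hpol.2 b hb]
        ring
      rw [e1, e2, add_zero]
    rw [← hxa, ha0, add_zero]; exact hx0
  · -- c ∈ pinf
    have hv : c ∈ pinf ⊔ B.polar p0 := by rw [hc.2.sup_eq_top]; trivial
    obtain ⟨y, hy, b, hb, hyb⟩ := Submodule.mem_sup.mp hv
    have hb0 : b = 0 := by
      apply hss
      intro v
      have hv' : v ∈ p0 ⊔ B.polar pinf := by rw [hc.1.sup_eq_top]; trivial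
      obtain ⟨x0, hx0, a, ha, rfl⟩ := Submodule.mem_sup.mp hv'
      rw [killing_add_right]
      have e1 : B.killing b x0 = 0 := hb x0 hx0
      have e2 : B.killing b a = 0 := by
        have : b = c - y := by rw [← hyb]; abel
        rw [this, killing_sub_left, killing_symm B y a, ha y hy,
          hpol.1 a ha]
        ring
      rw [e1, e2, add_zero]
    rw [← hyb, hb0, add_zero]; exact hy

include hss h0 hinf hc in
lemma span3 : B.polar pinf ⊔ (p0 ⊓ pinf) ⊔ B.polar p0 = (⊤ : Submodule ℝ L) := by
  rw [eq_top_iff, ← hc.1.sup_eq_top]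
  apply sup_le
  · intro x hx
    have hv : x ∈ pinf ⊔ B.polar p0 := by rw [hc.2.sup_eq_top]; trivial
    obtain ⟨y, hy, b, hb, hyb⟩ := Submodule.mem_sup.mp hv
    have hbp0 : b ∈ p0 := B_le_p0 B hss h0 hinf hc hb
    have hyP : y ∈ p0 ⊓ pinf :=
      ⟨by rw [show y = x - b from by rw [← hyb]; abel]; exact Submodule.sub_mem _ hx hbp0, hy⟩
    rw [← hyb]
    exact Submodule.add_mem _
      (Submodule.mem_sup_left (Submodule.mem_sup_right hyP))
      (Submodule.mem_sup_right hb)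
  · exact le_trans le_sup_left le_sup_left

include hss h0 hinf hc in
lemma end_ext {f g : Module.End ℝ L}
    (hA : ∀ v ∈ B.polar pinf, f v = g v)
    (hP : ∀ v ∈ p0 ⊓ pinf, f v = g v)
    (hB : ∀ v ∈ B.polar p0, f v = g v) : f = g := by
  have hker : B.polar pinf ⊔ (p0 ⊓ pinf) ⊔ B.polar p0 ≤ LinearMap.ker (f - g) := by
    refine sup_le (sup_le ?_ ?_) ?_ <;> intro v hv <;>
      rw [LinearMap.mem_ker, LinearMap.sub_apply, sub_eq_zero]
    exacts [hA v hv, hP v hv, hB v hv]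
  rw [span3 B hss h0 hinf hc] at hker
  have : f - g = 0 := LinearMap.ker_eq_top.mp (top_le_iff.mp hker)
  exact sub_eq_zero.mp this

omit [FiniteDimensional ℝ L] in
lemma ad_pow3_apply (z v : L) :
    (B.ad z ^ 3) v = B.bracket z (B.bracket z (B.bracket z v)) := by
  simp [pow_succ, Module.End.mul_apply, Module.End.one_apply, ad_apply]

include hss h0 hinf hc in
lemma ad_A_cube {z : L} (hz : z ∈ B.polar pinf) : B.ad z ^ 3 = 0 := by
  apply end_ext B hss h0 hinf hc
  · intro v hv
    rw [ad_pow3_apply, hinf.2 z hz v hv]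
    simp
  · intro v hv
    rw [ad_pow3_apply, hinf.2 z hz _ (bracket_polar_mem B hinf.1 hz hv.2)]
    simp
  · intro v hv
    rw [ad_pow3_apply,
      hinf.2 z hz _ (bracket_polar_mem B hinf.1 hz (bracket_AB_mem_P B hss h0 hinf hc hz hv).2)]
    simp

include hss h0 hinf hc in
lemma ad_B_cube {z : L} (hz : z ∈ B.polar p0) : B.ad z ^ 3 = 0 := by
  apply end_ext B hss h0 hinf hc
  · intro v hv
    have h1 : B.bracket z v ∈ p0 ⊓ pinf := by
      rw [bracket_skew]
      exact Submodule.neg_mem _ (bracket_AB_mem_P B hss h0 hinf hc hv hz)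
    rw [ad_pow3_apply, h0.2 z hz _ (bracket_polar_mem B h0.1 hz h1.1)]
    simp
  · intro v hv
    rw [ad_pow3_apply, h0.2 z hz _ (bracket_polar_mem B h0.1 hz hv.1)]
    simp
  · intro v hv
    rw [ad_pow3_apply, h0.2 z hz v hv]
    simp

omit [FiniteDimensional ℝ L] in
lemma ad_sq_apply (z w v : L) :
    (B.ad z * B.ad z * B.ad w) v = B.bracket z (B.bracket z (B.bracket w v)) := by
  simp [Module.End.mul_apply, ad_apply]

include hss h0 hinf hc in
lemma ad_B_sq {z w : L} (hz : z ∈ B.polar p0) (hw : w ∈ B.polar p0) :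
    B.ad z * B.ad z * B.ad w = 0 := by
  apply end_ext B hss h0 hinf hc
  · intro v hv
    have h1 : B.bracket w v ∈ p0 ⊓ pinf := by
      rw [bracket_skew]
      exact Submodule.neg_mem _ (bracket_AB_mem_P B hss h0 hinf hc hv hw)
    rw [ad_sq_apply, h0.2 z hz _ (bracket_polar_mem B h0.1 hz h1.1)]
    simp
  · intro v hv
    rw [ad_sq_apply, h0.2 z hz _ (bracket_polar_mem B h0.1 hw hv.1)]
    simp
  · intro v hv
    rw [ad_sq_apply, h0.2 w hw v hv]
    simp

include hss h0 hinf hc in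
lemma ad_A_sq {z w : L} (hz : z ∈ B.polar pinf) (hw : w ∈ B.polar pinf) :
    B.ad z * B.ad z * B.ad w = 0 := by
  apply end_ext B hss h0 hinf hc
  · intro v hv
    rw [ad_sq_apply, hinf.2 w hw v hv]
    simp
  · intro v hv
    rw [ad_sq_apply, hinf.2 z hz _ (bracket_polar_mem B hinf.1 hw hv.2)]
    simp
  · intro v hv
    have h1 : B.bracket w v ∈ p0 ⊓ pinf := bracket_AB_mem_P B hss h0 hinf hc hw hv
    rw [ad_sq_apply, hinf.2 z hz _ (bracket_polar_mem B hinf.1 hz h1.2)]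
    simp

omit [FiniteDimensional ℝ L] in
lemma ad_comm_of_bracket_eq_zero {z w : L} (h : B.bracket z w = 0) :
    B.ad z * B.ad w = B.ad w * B.ad z := by
  have h1 := ad_bracket B z w
  rw [h] at h1
  have h2 : B.ad (0 : L) = 0 := map_zero B.bracket
  rw [h2] at h1
  exact sub_eq_zero.mp h1.symm

include hss h0 hinf hc in
lemma g_comm_B {g : Module.End ℝ L} {t : ℝ} (ht : t ≠ 0) (hg : B.IsGammaMap p0 pinf t g)
    {w : L} (hw : w ∈ B.polar p0) : g * B.ad w = t⁻¹ • (B.ad w * g) := by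
  apply end_ext B hss h0 hinf hc <;> intro v hv <;>
    simp only [Module.End.mul_apply, LinearMap.smul_apply, ad_apply]
  · have hm : B.bracket w v ∈ p0 ⊓ pinf := by
      rw [bracket_skew]
      exact Submodule.neg_mem _ (bracket_AB_mem_P B hss h0 hinf hc hv hw)
    rw [hg.2.1 _ hm.1 hm.2, hg.1 v hv, map_smul, smul_smul, inv_mul_cancel₀ ht, one_smul]
  · have hm : B.bracket w v ∈ B.polar p0 := bracket_polar_mem B h0.1 hw hv.1
    rw [hg.2.2 _ hm, hg.2.1 v hv.1 hv.2]
  · rw [h0.2 w hw v hv, map_zero, hg.2.2 v hv, map_smul, h0.2 w hw v hv, smul_zero, smul_zero]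

include hss h0 hinf hc in
lemma g_comm_A {g : Module.End ℝ L} {t : ℝ} (ht : t ≠ 0) (hg : B.IsGammaMap p0 pinf t g)
    {w : L} (hw : w ∈ B.polar pinf) : g * B.ad w = t • (B.ad w * g) := by
  apply end_ext B hss h0 hinf hc <;> intro v hv <;>
    simp only [Module.End.mul_apply, LinearMap.smul_apply, ad_apply]
  · rw [hinf.2 w hw v hv, map_zero, hg.1 v hv, map_smul, hinf.2 w hw v hv, smul_zero, smul_zero]
  · have hm : B.bracket w v ∈ B.polar pinf := bracket_polar_mem B hinf.1 hw hv.2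
    rw [hg.1 _ hm, hg.2.1 v hv.1 hv.2]
  · have hm : B.bracket w v ∈ p0 ⊓ pinf := bracket_AB_mem_P B hss h0 hinf hc hw hv
    rw [hg.2.1 _ hm.1 hm.2, hg.2.2 v hv, map_smul, smul_smul, mul_inv_cancel₀ ht, one_smul]

end Struct

section RingLemmas
variable {R : Type*} [Ring R] [Algebra ℝ R]

lemma exp_mul_exp_neg (N : R) (h3 : N * (N * N) = 0) :
    (1 + N + (2:ℝ)⁻¹ • (N * N)) * (1 - N + (2:ℝ)⁻¹ • (N * N)) = 1 := by
  have h3l : ∀ Y : R, N * (N * (N * Y)) = 0 := fun Y => by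
    rw [show N * (N * (N * Y)) = N * (N * N) * Y by rw [mul_assoc, mul_assoc], h3, zero_mul]
  simp only [sub_eq_add_neg, add_mul, mul_add, neg_mul, mul_neg, smul_mul_assoc,
    mul_smul_comm, smul_smul, mul_one, one_mul, smul_add, smul_neg, mul_assoc, h3, h3l,
    smul_zero, mul_zero, zero_mul, add_zero, zero_add, neg_zero]
  module

lemma exp_neg_mul_exp (N : R) (h3 : N * (N * N) = 0) :
    (1 - N + (2:ℝ)⁻¹ • (N * N)) * (1 + N + (2:ℝ)⁻¹ • (N * N)) = 1 := by
  have h3l : ∀ Y : R, N * (N * (N * Y)) = 0 := fun Y => by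
    rw [show N * (N * (N * Y)) = N * (N * N) * Y by rw [mul_assoc, mul_assoc], h3, zero_mul]
  simp only [sub_eq_add_neg, add_mul, mul_add, neg_mul, mul_neg, smul_mul_assoc,
    mul_smul_comm, smul_smul, mul_one, one_mul, smul_add, smul_neg, mul_assoc, h3, h3l,
    smul_zero, mul_zero, zero_mul, add_zero, zero_add, neg_zero]
  module

lemma conj_ring (N X : R) (h3 : N * (N * N) = 0)
    (hX : N * (N * (N * X - X * N) - (N * X - X * N) * N)
        = (N * (N * X - X * N) - (N * X - X * N) * N) * N) :
    (1 - N + (2:ℝ)⁻¹ • (N * N)) *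
      (X + (N * X - X * N) + (2:ℝ)⁻¹ • (N * (N * X - X * N) - (N * X - X * N) * N))
    = X * (1 - N + (2:ℝ)⁻¹ • (N * N)) := by
  have h3l : ∀ Y : R, N * (N * (N * Y)) = 0 := fun Y => by
    rw [show N * (N * (N * Y)) = N * (N * N) * Y by rw [mul_assoc, mul_assoc], h3, zero_mul]
  set a := N * (N * (X * N)) with ha
  set b := N * (X * (N * N)) with hb
  have hid : N * (N * (N * X - X * N) - (N * X - X * N) * N)
      - (N * (N * (N * X - X * N) - (N * X - X * N) * N)) + (0:R)
      = 0 := by abel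
  have hexp : N * (N * (N * X - X * N) - (N * X - X * N) * N)
      - (N * (N * X - X * N) - (N * X - X * N) * N) * N
      = N * (N * (N * X)) - (a + a + a) + (b + b + b) - X * (N * (N * N)) := by
    simp only [ha, hb]
    noncomm_ring
  have hcomm : a = b := by
    have h0' : (0 : R) = N * (N * (N * X)) - (a + a + a) + (b + b + b) - X * (N * (N * N)) := by
      rw [← hexp, hX, sub_self]
    rw [h3l X, show X * (N * (N * N)) = 0 by rw [h3, mul_zero], zero_sub, sub_zero] at h0'
    have h1' : a + a + a = b + b + b := neg_add_eq_zero.mp h0'.symm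
    have : a = (3:ℝ)⁻¹ • (a + a + a) := by module
    rw [this, h1']
    module
  have hc0 : N * (N * (X * (N * N))) = 0 := by
    rw [← hb, ← hcomm, ha, h3l (X * N)]
  simp only [sub_eq_add_neg, add_mul, mul_add, neg_mul, mul_neg, smul_mul_assoc,
    mul_smul_comm, smul_smul, mul_one, one_mul, smul_add, smul_neg, mul_assoc, h3, h3l,
    smul_zero, mul_zero, zero_mul, add_zero, zero_add, neg_zero, neg_neg, neg_add,
    show X * (N * (N * N)) = 0 by rw [h3, mul_zero], hc0]
  rw [show N * (X * (N * N)) = N * (N * (X * N)) from hcomm.symm]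
  module

end RingLemmas

section Trunc
variable {L : Type*} [NormedAddCommGroup L] [NormedSpace ℝ L] [FiniteDimensional ℝ L]
  (B : LieStructure L)

lemma pow_finrank_eq_zero {f : Module.End ℝ L} (h : IsNilpotent f) :
    f ^ (Module.finrank ℝ L) = 0 := by
  have hc := h.charpoly_eq_X_pow_finrank
  have h2 := f.aeval_self_charpoly
  rw [hc] at h2
  simpa using h2

lemma expAd_eq_of_cube {z : L} (h3 : B.ad z ^ 3 = 0) :
    B.expAd z = 1 + B.ad z + (2:ℝ)⁻¹ • (B.ad z * B.ad z) := by
  have hsum3 : ∑ k ∈ Finset.range 3, (k.factorial : ℝ)⁻¹ • (B.ad z) ^ k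
      = 1 + B.ad z + (2:ℝ)⁻¹ • (B.ad z * B.ad z) := by
    rw [Finset.sum_range_succ, Finset.sum_range_succ, Finset.sum_range_one]
    norm_num [Nat.factorial, pow_succ]
  rcases Nat.lt_or_ge (Module.finrank ℝ L) 2 with hn | hn
  · interval_cases hfr : Module.finrank ℝ L
    · have hsub : Subsingleton L := by
        have := Module.finrank_zero_iff (R := ℝ) (M := L)
        exact this.mp hfr
      exact Subsingleton.elim _ _
    · have hN : B.ad z = 0 := by
        have := pow_finrank_eq_zero (f := B.ad z) ⟨3, h3⟩
        rwa [hfr, pow_one] at this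
      rw [expAd, hfr]
      rw [Finset.sum_range_succ, Finset.sum_range_one]
      norm_num [hN]
  · rw [expAd, ← Finset.sum_subset (Finset.range_subset_range.mpr (by omega) :
      Finset.range 3 ⊆ Finset.range (Module.finrank ℝ L + 1)), hsum3]
    intro k _ hk
    have hk3 : 3 ≤ k := by simpa using Nat.le_of_not_lt (by simpa using hk)
    rw [show (B.ad z) ^ k = (B.ad z) ^ 3 * (B.ad z) ^ (k - 3) by
      rw [← pow_add]; congr 1; omega, h3, zero_mul, smul_zero]

lemma expAd_neg_eq_of_cube {z : L} (h3 : B.ad z ^ 3 = 0) :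
    B.expAd (-z) = 1 - B.ad z + (2:ℝ)⁻¹ • (B.ad z * B.ad z) := by
  have hneg : B.ad (-z) = - B.ad z := map_neg B.bracket z
  have h3' : B.ad (-z) ^ 3 = 0 := by
    rw [hneg, Odd.neg_pow ⟨1, by norm_num⟩, h3, neg_zero]
  rw [expAd_eq_of_cube B h3', hneg]
  rw [neg_mul_neg, sub_eq_add_neg]

end Trunc

section Exp
variable {L : Type*} [NormedAddCommGroup L] [NormedSpace ℝ L] [FiniteDimensional ℝ L]
  (B : LieStructure L)

/-- Truncated exponential `1 + ad z + ad z² / 2`. -/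
noncomputable def Ep (z : L) : Module.End ℝ L :=
  1 + B.ad z + (2:ℝ)⁻¹ • (B.ad z * B.ad z)

/-- Truncated exponential `1 - ad z + ad z² / 2`. -/
noncomputable def Em (z : L) : Module.End ℝ L :=
  1 - B.ad z + (2:ℝ)⁻¹ • (B.ad z * B.ad z)

lemma cube_mul {z : L} (h3 : B.ad z ^ 3 = 0) : B.ad z * (B.ad z * B.ad z) = 0 := by
  rw [show B.ad z * (B.ad z * B.ad z) = B.ad z ^ 3 by
    rw [pow_succ, pow_succ, pow_one, mul_assoc], h3]

lemma expAd_eq_Ep {z : L} (h3 : B.ad z ^ 3 = 0) : B.expAd z = Ep B z :=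
  expAd_eq_of_cube B h3

lemma expAd_neg_eq_Em {z : L} (h3 : B.ad z ^ 3 = 0) : B.expAd (-z) = Em B z :=
  expAd_neg_eq_of_cube B h3

lemma Ep_mul_Em {z : L} (h3 : B.ad z ^ 3 = 0) : Ep B z * Em B z = 1 :=
  exp_mul_exp_neg (B.ad z) (cube_mul B h3)

lemma Em_mul_Ep {z : L} (h3 : B.ad z ^ 3 = 0) : Em B z * Ep B z = 1 :=
  exp_neg_mul_exp (B.ad z) (cube_mul B h3)

lemma Ep_apply (z v : L) :
    Ep B z v = v + B.bracket z v + (2:ℝ)⁻¹ • (B.bracket z (B.bracket z v)) := by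
  simp [Ep, LinearMap.add_apply, LinearMap.smul_apply, Module.End.mul_apply,
    Module.End.one_apply, ad_apply]

lemma Em_apply (z v : L) :
    Em B z v = v - B.bracket z v + (2:ℝ)⁻¹ • (B.bracket z (B.bracket z v)) := by
  simp [Em, LinearMap.sub_apply, LinearMap.add_apply, LinearMap.smul_apply,
    Module.End.mul_apply, Module.End.one_apply, ad_apply]

/-- Conjugation: `Em z ∘ ad (Ep z w) = ad w ∘ Em z` when `(ad z)³ = 0` and
`ad ((ad z)³ w) = 0`. -/
lemma Em_ad_conj {z : L} (h3 : B.ad z ^ 3 = 0) (w : L) :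
    Em B z * B.ad (Ep B z w) = B.ad w * Em B z := by
  set N := B.ad z with hN
  set X := B.ad w with hX
  have e1 : B.ad (B.bracket z w) = N * X - X * N := ad_bracket B z w
  have e2 : B.ad (B.bracket z (B.bracket z w))
      = N * (N * X - X * N) - (N * X - X * N) * N := by
    rw [ad_bracket B z (B.bracket z w), e1]
  have e3 : B.bracket z (B.bracket z (B.bracket z w)) = 0 := by
    have h := ad_pow3_apply B z w
    rw [h3, LinearMap.zero_apply] at h
    exact h.symm
  have hXcomm : N * (N * (N * X - X * N) - (N * X - X * N) * N)
      = (N * (N * X - X * N) - (N * X - X * N) * N) * N := by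
    have h := ad_bracket B z (B.bracket z (B.bracket z w))
    rw [e3, show B.ad (0:L) = 0 from map_zero B.bracket] at h
    rw [e2] at h
    exact (sub_eq_zero.mp h.symm)
  have hEpw : B.ad (Ep B z w)
      = X + (N * X - X * N)
        + (2:ℝ)⁻¹ • (N * (N * X - X * N) - (N * X - X * N) * N) := by
    rw [Ep_apply]
    have : B.ad (w + B.bracket z w + (2:ℝ)⁻¹ • B.bracket z (B.bracket z w))
        = B.ad w + B.ad (B.bracket z w) + (2:ℝ)⁻¹ • B.ad (B.bracket z (B.bracket z w)) := by
      show B.bracket _ = _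
      rw [map_add, map_add, map_smul]
      rfl
    rw [this, e1, e2]
  rw [hEpw]
  exact conj_ring N X (cube_mul B h3) hXcomm

lemma ad_Ep_conj {z : L} (h3 : B.ad z ^ 3 = 0) (w : L) :
    B.ad (Ep B z w) * Ep B z = Ep B z * B.ad w := by
  have h := Em_ad_conj B h3 w
  calc B.ad (Ep B z w) * Ep B z
      = (Ep B z * Em B z) * B.ad (Ep B z w) * Ep B z := by rw [Ep_mul_Em B h3, one_mul]
    _ = Ep B z * (Em B z * B.ad (Ep B z w)) * Ep B z := by rw [mul_assoc (Ep B z)]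
    _ = Ep B z * (B.ad w * Em B z) * Ep B z := by rw [h]
    _ = Ep B z * B.ad w := by
        rw [mul_assoc, mul_assoc, Em_mul_Ep B h3, mul_one]

lemma Ep_fix {z w : L} (h : B.bracket z w = 0) : Ep B z w = w := by
  rw [Ep_apply, h, map_zero, smul_zero, add_zero, add_zero]

end Exp

section Master
variable {L : Type*} [NormedAddCommGroup L] [NormedSpace ℝ L] [FiniteDimensional ℝ L]
  (B : LieStructure L)
variable {p0 pinf : Submodule ℝ L} (hss : B.IsSemisimple)
  (h0 : B.IsH1Parabolic p0) (hinf : B.IsH1Parabolic pinf)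
  (hc : B.ComplPair p0 pinf)

include hss h0 hinf hc in
/-- The master operator identity behind the Christoffel gauge. -/
lemma master {g : Module.End ℝ L} {t : ℝ} (ht : t ≠ 0) (hg : B.IsGammaMap p0 pinf t g)
    {z zc w wc : L} (hz : z ∈ B.polar pinf) (hzc : zc ∈ B.polar p0)
    (hw : w ∈ B.polar pinf) (hwc : wc ∈ B.polar p0) (v : L) :
    t • ((Ep B zc * g * Em B z) (B.bracket (Ep B z wc) v))
      = ((Ep B zc * B.ad wc * g * Em B z) v - (Ep B zc * g * B.ad w * Em B z) v)
        + t • B.bracket (Ep B zc w) ((Ep B zc * g * Em B z) v) := by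
  have h3z : B.ad z ^ 3 = 0 := ad_A_cube B hss h0 hinf hc hz
  have h3zc : B.ad zc ^ 3 = 0 := ad_B_cube B hss h0 hinf hc hzc
  -- first operator identity
  have op1 : (Ep B zc * g * Em B z) * B.ad (Ep B z wc)
      = t⁻¹ • (Ep B zc * B.ad wc * g * Em B z) := by
    calc (Ep B zc * g * Em B z) * B.ad (Ep B z wc)
        = Ep B zc * g * (Em B z * B.ad (Ep B z wc)) := by rw [mul_assoc]
      _ = Ep B zc * g * (B.ad wc * Em B z) := by rw [Em_ad_conj B h3z wc]
      _ = Ep B zc * (g * B.ad wc) * Em B z := by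
          simp only [mul_assoc]
      _ = Ep B zc * (t⁻¹ • (B.ad wc * g)) * Em B z := by
          rw [g_comm_B B hss h0 hinf hc ht hg hwc]
      _ = t⁻¹ • (Ep B zc * B.ad wc * g * Em B z) := by
          rw [mul_smul_comm, smul_mul_assoc]
          simp only [mul_assoc]
  -- second operator identity
  have op2 : B.ad (Ep B zc w) * (Ep B zc * g * Em B z)
      = t⁻¹ • (Ep B zc * g * B.ad w * Em B z) := by
    have h4 : B.ad w * g = t⁻¹ • (g * B.ad w) := by
      rw [g_comm_A B hss h0 hinf hc ht hg hw, smul_smul, inv_mul_cancel₀ ht, one_smul]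
    calc B.ad (Ep B zc w) * (Ep B zc * g * Em B z)
        = (B.ad (Ep B zc w) * Ep B zc) * (g * Em B z) := by
          simp only [mul_assoc]
      _ = (Ep B zc * B.ad w) * (g * Em B z) := by rw [ad_Ep_conj B h3zc w]
      _ = Ep B zc * ((B.ad w * g) * Em B z) := by
          simp only [mul_assoc]
      _ = Ep B zc * ((t⁻¹ • (g * B.ad w)) * Em B z) := by rw [h4]
      _ = t⁻¹ • (Ep B zc * g * B.ad w * Em B z) := by
          rw [smul_mul_assoc, mul_smul_comm]
          simp only [mul_assoc]
  have lhs_eq : t • ((Ep B zc * g * Em B z) (B.bracket (Ep B z wc) v))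
      = (Ep B zc * B.ad wc * g * Em B z) v := by
    have : (Ep B zc * g * Em B z) (B.bracket (Ep B z wc) v)
        = ((Ep B zc * g * Em B z) * B.ad (Ep B z wc)) v := rfl
    rw [this, op1, LinearMap.smul_apply, smul_smul, mul_inv_cancel₀ ht, one_smul]
  have rhs_eq : t • B.bracket (Ep B zc w) ((Ep B zc * g * Em B z) v)
      = (Ep B zc * g * B.ad w * Em B z) v := by
    have : B.bracket (Ep B zc w) ((Ep B zc * g * Em B z) v)
        = (B.ad (Ep B zc w) * (Ep B zc * g * Em B z)) v := rfl
    rw [this, op2, LinearMap.smul_apply, smul_smul, mul_inv_cancel₀ ht, one_smul]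
  rw [lhs_eq, rhs_eq]
  abel

include hss h0 hinf hc in
lemma Dm_simp {z w : L} (hz : z ∈ B.polar pinf) (hw : w ∈ B.polar pinf) :
    - B.ad w + (2:ℝ)⁻¹ • (B.ad z * B.ad w + B.ad w * B.ad z) = -(B.ad w * Em B z) := by
  have c1 : B.ad z * B.ad w = B.ad w * B.ad z :=
    ad_comm_of_bracket_eq_zero B (hinf.2 z hz w hw)
  have s1 : B.ad z * B.ad z * B.ad w = 0 := ad_A_sq B hss h0 hinf hc hz hw
  have hXNN : B.ad w * (B.ad z * B.ad z) = 0 := by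
    rw [← mul_assoc, ← c1, mul_assoc, ← c1, ← mul_assoc, s1]
  rw [Em]
  simp only [mul_sub, mul_add, mul_one, mul_smul_comm, hXNN, smul_zero, c1]
  module

include hss h0 hinf hc in
lemma Dp_simp {zc wc : L} (hzc : zc ∈ B.polar p0) (hwc : wc ∈ B.polar p0) :
    B.ad wc + (2:ℝ)⁻¹ • (B.ad zc * B.ad wc + B.ad wc * B.ad zc) = Ep B zc * B.ad wc := by
  have c2 : B.ad zc * B.ad wc = B.ad wc * B.ad zc :=
    ad_comm_of_bracket_eq_zero B (h0.2 zc hzc wc hwc)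
  have s2 : B.ad zc * B.ad zc * B.ad wc = 0 := ad_B_sq B hss h0 hinf hc hzc hwc
  rw [Ep]
  simp only [add_mul, one_mul, smul_mul_assoc, s2, smul_zero, add_zero, ← c2]
  module

end Master


section CLM
variable {L : Type*} [NormedAddCommGroup L] [NormedSpace ℝ L] [FiniteDimensional ℝ L]
  (B : LieStructure L)

/-- The adjoint action as a continuous-linear-map-valued linear map. -/
noncomputable def adCL : L →ₗ[ℝ] (L →L[ℝ] L) where
  toFun z := LinearMap.toContinuousLinearMap (B.bracket z)
  map_add' x y := by ext v; simp
  map_smul' c x := by ext v; simp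

/-- The adjoint action as a continuous bilinear map. -/
noncomputable def adC : L →L[ℝ] (L →L[ℝ] L) := LinearMap.toContinuousLinearMap (adCL B)

@[simp] lemma adC_apply (z v : L) : adC B z v = B.bracket z v := rfl

/-- Continuous version of `Ep`. -/
noncomputable def EpC (z : L) : L →L[ℝ] L :=
  1 + adC B z + (2:ℝ)⁻¹ • (adC B z * adC B z)

/-- Continuous version of `Em`. -/
noncomputable def EmC (z : L) : L →L[ℝ] L :=
  1 - adC B z + (2:ℝ)⁻¹ • (adC B z * adC B z)

@[simp] lemma EpC_apply (z v : L) : EpC B z v = Ep B z v := by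
  simp [EpC, Ep_apply, ContinuousLinearMap.add_apply, ContinuousLinearMap.smul_apply,
    ContinuousLinearMap.mul_apply, ContinuousLinearMap.one_apply]

@[simp] lemma EmC_apply (z v : L) : EmC B z v = Em B z v := by
  simp [EmC, Em_apply, ContinuousLinearMap.sub_apply, ContinuousLinearMap.add_apply,
    ContinuousLinearMap.smul_apply, ContinuousLinearMap.mul_apply,
    ContinuousLinearMap.one_apply]

end CLM

lemma fderiv_mem {E : Type*} [NormedAddCommGroup E] [NormedSpace ℝ E]
    {L : Type*} [NormedAddCommGroup L] [NormedSpace ℝ L] [FiniteDimensional ℝ L]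
    {U : Set E} (hU : IsOpen U) {F : E → L} {S : Submodule ℝ L}
    (hFS : ∀ y ∈ U, F y ∈ S) {x : E} (hx : x ∈ U) (u : E) :
    fderiv ℝ F x u ∈ S := by
  by_cases hdiff : DifferentiableAt ℝ F x
  · obtain ⟨T, hT⟩ := Submodule.exists_isCompl S
    set π : L →L[ℝ] L :=
      LinearMap.toContinuousLinearMap (S.subtype ∘ₗ (S.linearProjOfIsCompl T hT)) with hπ
    have hrange : ∀ v : L, π v ∈ S := fun v => by
      have : π v = S.subtype (S.linearProjOfIsCompl T hT v) := rfl
      rw [this]; exact (S.linearProjOfIsCompl T hT v).2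
    have hfix : ∀ v ∈ S, π v = v := fun v hv => by
      have h1 : π v = S.subtype (S.linearProjOfIsCompl T hT v) := rfl
      have h2 := Submodule.linearProjOfIsCompl_apply_left hT ⟨v, hv⟩
      rw [h1, show (⟨v, hv⟩ : S) = (⟨v, hv⟩ : S) from rfl] at *
      erw [show S.linearProjOfIsCompl T hT v = S.linearProjOfIsCompl T hT ((⟨v, hv⟩ : S) : L)
        from rfl, h2]
      rfl
    have heq : (fun y => π (F y)) =ᶠ[nhds x] F := by
      filter_upwards [hU.mem_nhds hx] with y hy
      exact hfix (F y) (hFS y hy)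
    have h1 : fderiv ℝ (fun y => π (F y)) x = π.comp (fderiv ℝ F x) := by
      have := π.hasFDerivAt.comp x hdiff.hasFDerivAt
      exact this.fderiv
    have h2 : fderiv ℝ (fun y => π (F y)) x = fderiv ℝ F x := heq.fderiv_eq
    rw [h1] at h2
    have h3 := congrArg (fun (M : E →L[ℝ] L) => M u) h2
    simp only [ContinuousLinearMap.comp_apply] at h3
    rw [← h3]; exact hrange _
  · rw [fderiv_zero_of_not_differentiableAt hdiff]
    simp

end CGaux

set_option synthInstance.maxHeartbeats 1000000 in
set_option maxHeartbeats 1000000 in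
/-- **The Christoffel gauge.**  For a Christoffel pair `(F, F^c)` in
stereoprojection with respect to `(𝔭₀, 𝔭∞)`, and
`Γ^c(t)(x) := exp(ad F^c(x)) ∘ Γ_{𝔭₀}^{𝔭∞}(t) ∘ exp(−ad F(x))`, the family `Γ^c(t)`
gauges `d + tη` to `d + tη^c`, where `η = exp(ad F)·dF^c` and
`η^c = exp(ad F^c)·dF`. -/
theorem christoffel_gauge
    {L : Type*} [NormedAddCommGroup L] [NormedSpace ℝ L] [FiniteDimensional ℝ L]
    (B : LieStructure L) (hss : B.IsSemisimple)
    {E : Type*} [NormedAddCommGroup E] [NormedSpace ℝ E] [FiniteDimensional ℝ E]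
    (U : Set E) (hU : IsOpen U)
    (p0 pinf : Submodule ℝ L)
    (h0 : B.IsH1Parabolic p0) (hinf : B.IsH1Parabolic pinf)
    (hc : B.ComplPair p0 pinf)
    (F : E → L) (hF : ContDiffOn ℝ (⊤ : ℕ∞) F U)
    (hFval : ∀ x ∈ U, F x ∈ B.polar pinf)
    (Fc : E → L) (hFc : ContDiffOn ℝ (⊤ : ℕ∞) Fc U)
    (hFcval : ∀ x ∈ U, Fc x ∈ B.polar p0)
    (hsymm : ∀ x ∈ U, ∀ u v : E,
      B.bracket (fderiv ℝ F x u) (fderiv ℝ Fc x v) =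
      B.bracket (fderiv ℝ F x v) (fderiv ℝ Fc x u))
    (t : ℝ) (ht : t ≠ 0)
    (g : Module.End ℝ L) (hg : B.IsGammaMap p0 pinf t g) :
    ∀ ψ : E → L, ContDiffOn ℝ (⊤ : ℕ∞) ψ U →
      ∀ x ∈ U, ∀ u : E,
        (B.expAd (Fc x) * g * B.expAd (-(F x)))
            (fderiv ℝ ψ x u + t • B.bracket (B.expAd (F x) (fderiv ℝ Fc x u)) (ψ x)) =
        fderiv ℝ (fun y => (B.expAd (Fc y) * g * B.expAd (-(F y))) (ψ y)) x u +
          t • B.bracket (B.expAd (Fc x) (fderiv ℝ F x u))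
            ((B.expAd (Fc x) * g * B.expAd (-(F x))) (ψ x)) := by
  intro ψ hψ x hx u
  have hFd : DifferentiableAt ℝ F x :=
    (hF.differentiableOn (by simp)).differentiableAt (hU.mem_nhds hx)
  have hFcd : DifferentiableAt ℝ Fc x :=
    (hFc.differentiableOn (by simp)).differentiableAt (hU.mem_nhds hx)
  have hψd : DifferentiableAt ℝ ψ x :=
    (hψ.differentiableOn (by simp)).differentiableAt (hU.mem_nhds hx)
  have hz : F x ∈ B.polar pinf := hFval x hx
  have hzc : Fc x ∈ B.polar p0 := hFcval x hx
  have hw : fderiv ℝ F x u ∈ B.polar pinf := CGaux.fderiv_mem hU hFval hx u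
  have hwc : fderiv ℝ Fc x u ∈ B.polar p0 := CGaux.fderiv_mem hU hFcval hx u
  have h3z : B.ad (F x) ^ 3 = 0 := CGaux.ad_A_cube B hss h0 hinf hc hz
  have h3zc : B.ad (Fc x) ^ 3 = 0 := CGaux.ad_B_cube B hss h0 hinf hc hzc
  set gC : L →L[ℝ] L := LinearMap.toContinuousLinearMap g with hgCdef
  have hadF : HasFDerivAt (fun y => CGaux.adC B (F y))
      ((CGaux.adC B).comp (fderiv ℝ F x)) x := by
    have := (CGaux.adC B).hasFDerivAt.comp x hFd.hasFDerivAt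
    simpa [Function.comp_def] using this
  have hadFc : HasFDerivAt (fun y => CGaux.adC B (Fc y))
      ((CGaux.adC B).comp (fderiv ℝ Fc x)) x := by
    have := (CGaux.adC B).hasFDerivAt.comp x hFcd.hasFDerivAt
    simpa [Function.comp_def] using this
  have hTp : HasFDerivAt (fun y => CGaux.EpC B (Fc y))
      (((0 : E →L[ℝ] (L →L[ℝ] L)) + (CGaux.adC B).comp (fderiv ℝ Fc x))
        + (2:ℝ)⁻¹ • (CGaux.adC B (Fc x) • ((CGaux.adC B).comp (fderiv ℝ Fc x))
          + ((CGaux.adC B).comp (fderiv ℝ Fc x)).smulRight (CGaux.adC B (Fc x)))) x :=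
    ((hasFDerivAt_const (1 : L →L[ℝ] L) x).add hadFc).add
      ((hadFc.mul' hadFc).const_smul ((2:ℝ)⁻¹))
  have hSm : HasFDerivAt (fun y => CGaux.EmC B (F y))
      (((0 : E →L[ℝ] (L →L[ℝ] L)) - (CGaux.adC B).comp (fderiv ℝ F x))
        + (2:ℝ)⁻¹ • (CGaux.adC B (F x) • ((CGaux.adC B).comp (fderiv ℝ F x))
          + ((CGaux.adC B).comp (fderiv ℝ F x)).smulRight (CGaux.adC B (F x)))) x :=
    ((hasFDerivAt_const (1 : L →L[ℝ] L) x).sub hadF).add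
      ((hadF.mul' hadF).const_smul ((2:ℝ)⁻¹))
  have hPg := hTp.mul' (hasFDerivAt_const gC x)
  have hGd := hPg.mul' hSm
  have hfull : HasFDerivAt (fun y => (CGaux.EpC B (Fc y) * gC * CGaux.EmC B (F y)) (ψ y)) _ x :=
    hGd.clm_apply hψd.hasFDerivAt
  have heqf : fderiv ℝ (fun y => (B.expAd (Fc y) * g * B.expAd (-(F y))) (ψ y)) x
      = fderiv ℝ (fun y => (CGaux.EpC B (Fc y) * gC * CGaux.EmC B (F y)) (ψ y)) x := by
    apply Filter.EventuallyEq.fderiv_eq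
    filter_upwards [hU.mem_nhds hx] with y hy
    rw [CGaux.expAd_eq_Ep B (CGaux.ad_B_cube B hss h0 hinf hc (hFcval y hy)),
      CGaux.expAd_neg_eq_Em B (CGaux.ad_A_cube B hss h0 hinf hc (hFval y hy))]
    simp [Module.End.mul_apply, ContinuousLinearMap.mul_apply, hgCdef]
  rw [heqf, hfull.fderiv]
  rw [CGaux.expAd_eq_Ep B h3zc, CGaux.expAd_eq_Ep B h3z, CGaux.expAd_neg_eq_Em B h3z]
  rw [map_add, map_smul]
  simp only [ContinuousLinearMap.add_apply, ContinuousLinearMap.coe_comp', Function.comp_apply,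
    ContinuousLinearMap.flip_apply, ContinuousLinearMap.smul_apply, ContinuousLinearMap.sub_apply,
    ContinuousLinearMap.smulRight_apply, ContinuousLinearMap.zero_apply, smul_eq_mul,
    ContinuousLinearMap.neg_apply, ContinuousLinearMap.comp_apply,
    smul_zero, zero_add, add_zero, zero_sub, zero_mul, mul_zero, Pi.mul_apply, op_smul_eq_mul]
  rw [CGaux.master B hss h0 hinf hc ht hg hz hzc hw hwc (ψ x)]
  have e1 : (CGaux.EpC B (Fc x) * gC * CGaux.EmC B (F x)) ((fderiv ℝ ψ x) u)
      = (CGaux.Ep B (Fc x) * g * CGaux.Em B (F x)) ((fderiv ℝ ψ x) u) := by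
    simp [hgCdef, ContinuousLinearMap.mul_apply, Module.End.mul_apply]
  have e2' : (CGaux.EpC B (Fc x) * gC *
        (-(CGaux.adC B) ((fderiv ℝ F x) u) +
          (2:ℝ)⁻¹ • ((CGaux.adC B) (F x) * (CGaux.adC B) ((fderiv ℝ F x) u) +
            (CGaux.adC B) ((fderiv ℝ F x) u) * (CGaux.adC B) (F x)))) (ψ x)
      = (CGaux.Ep B (Fc x) * g *
          (-B.ad ((fderiv ℝ F x) u) +
            (2:ℝ)⁻¹ • (B.ad (F x) * B.ad ((fderiv ℝ F x) u) +
              B.ad ((fderiv ℝ F x) u) * B.ad (F x)))) (ψ x) := by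
    simp [hgCdef, ContinuousLinearMap.mul_apply, Module.End.mul_apply,
      ContinuousLinearMap.add_apply, LinearMap.add_apply, ContinuousLinearMap.neg_apply,
      LinearMap.neg_apply, ContinuousLinearMap.smul_apply, LinearMap.smul_apply,
      CGaux.Ep_apply, CGaux.Em_apply, CGaux.ad_apply]
  have e3' : (((CGaux.adC B) ((fderiv ℝ Fc x) u) +
          (2:ℝ)⁻¹ • ((CGaux.adC B) (Fc x) * (CGaux.adC B) ((fderiv ℝ Fc x) u) +
            (CGaux.adC B) ((fderiv ℝ Fc x) u) * (CGaux.adC B) (Fc x))) * gC *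
        CGaux.EmC B (F x)) (ψ x)
      = ((B.ad ((fderiv ℝ Fc x) u) +
          (2:ℝ)⁻¹ • (B.ad (Fc x) * B.ad ((fderiv ℝ Fc x) u) +
            B.ad ((fderiv ℝ Fc x) u) * B.ad (Fc x))) * g *
        CGaux.Em B (F x)) (ψ x) := by
    simp [hgCdef, ContinuousLinearMap.mul_apply, Module.End.mul_apply,
      ContinuousLinearMap.add_apply, LinearMap.add_apply, ContinuousLinearMap.neg_apply,
      LinearMap.neg_apply, ContinuousLinearMap.smul_apply, LinearMap.smul_apply,
      CGaux.Ep_apply, CGaux.Em_apply, CGaux.ad_apply]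
  have e2end : CGaux.Ep B (Fc x) * g *
        (-B.ad ((fderiv ℝ F x) u) +
          (2:ℝ)⁻¹ • (B.ad (F x) * B.ad ((fderiv ℝ F x) u) +
            B.ad ((fderiv ℝ F x) u) * B.ad (F x)))
      = -(CGaux.Ep B (Fc x) * g * B.ad ((fderiv ℝ F x) u) * CGaux.Em B (F x)) := by
    rw [CGaux.Dm_simp B hss h0 hinf hc hz hw]
    simp only [mul_neg, mul_assoc]
  have e3end : (B.ad ((fderiv ℝ Fc x) u) +
          (2:ℝ)⁻¹ • (B.ad (Fc x) * B.ad ((fderiv ℝ Fc x) u) +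
            B.ad ((fderiv ℝ Fc x) u) * B.ad (Fc x))) * g * CGaux.Em B (F x)
      = CGaux.Ep B (Fc x) * B.ad ((fderiv ℝ Fc x) u) * g * CGaux.Em B (F x) := by
    rw [CGaux.Dp_simp B hss h0 hinf hc hzc hwc]
  rw [e1, e2', e3', e2end, e3end]
  simp only [LinearMap.neg_apply]
  abel
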